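/- Under uniform voting on 3 alternatives with n voters, if I_1(f^{a>b}) > ε and I_2(f^{b>c}) > ε, then the probability (over a uniform profile σ ∈ S(3)^n) of the event B that voter 1 is pivotal for f^{a>b} at x^{a>b}(σ) and voter 2 is pivotal for f^{b>c} at x^{b>c}(σ) satisfies P[B] ≥ ε³. -/

import Mathlib

/-- Voter `i` is pivotal for `f` at input `x`. -/
def PivotalAt {n : ℕ} (f : (Fin n → Bool) → Bool) (i : Fin n) (x : Fin n → Bool) : Prop :=
  f (Function.update x i true) ≠ f (Function.update x i false)

instance {n : ℕ} (f : (Fin n → Bool) → Bool) (i : Fin n) (x : Fin n → Bool) :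
    Decidable (PivotalAt f i x) := by unfold PivotalAt; infer_instance

/-- The influence of voter `i` on `f` (uniform measure on the cube). -/
noncomputable def influence {n : ℕ} (f : (Fin n → Bool) → Bool) (i : Fin n) : ℝ :=
  ((Finset.univ.filter fun x : Fin n → Bool => PivotalAt f i x).card : ℝ) / 2^n

/-- `x^{a>b}` vector of a profile. -/
def pairVec {n : ℕ} (a b : Fin 3) (σ : Fin n → Equiv.Perm (Fin 3)) : Fin n → Bool :=
  fun i => decide (σ i a < σ i b)

open Finset
noncomputable def pw (x : ℝ) : ℝ := x * Real.sqrt x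

lemma pw_nonneg {x : ℝ} (hx : 0 ≤ x) : 0 ≤ pw x :=
  mul_nonneg hx (Real.sqrt_nonneg x)

lemma pw_sq {a : ℝ} (ha : 0 ≤ a) : pw (a^2) = a^3 := by
  rw [pw, Real.sqrt_sq ha]; ring

lemma pw_sqrt_cube {a : ℝ} (ha : 0 ≤ a) : pw a = (Real.sqrt a)^3 := by
  have h := Real.sq_sqrt ha
  rw [pw]; linear_combination (-(Real.sqrt a)) * h

lemma pw_mono {a b : ℝ} (ha : 0 ≤ a) (hab : a ≤ b) : pw a ≤ pw b :=
  mul_le_mul hab (Real.sqrt_le_sqrt hab) (Real.sqrt_nonneg a) (le_trans ha hab)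

lemma pw_self_mul {a : ℝ} (ha : 0 ≤ a) : pw a * pw a = a^3 := by
  have h := Real.sq_sqrt ha
  rw [pw]; linear_combination a^2 * h

section KeyIneq

lemma poly_core {c d : ℝ} (hc : 0 ≤ c) (hd : 0 ≤ d) :
    9 * (c^2+d^2)^3 * ((c^3+2*d^3)^2 + (2*c^3+d^3)^2)
      ≤ 16 * ((c^3+2*d^3)^2 * (2*c^3+d^3)^2) := by
  have hE : 0 ≤ 19*c^8+76*c^7*d+55*c^6*d^2+88*c^5*d^3+172*c^4*d^4+88*c^3*d^5
      +55*c^2*d^6+76*c*d^7+19*d^8 := by positivity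
  nlinarith [mul_nonneg (by positivity : (0:ℝ) ≤ (c-d)^4) hE]

lemma tang {r x q s : ℝ} (hr : 0 ≤ r) (hx : 0 ≤ x) (hq : 0 ≤ q) (hs : 0 ≤ s) :
    3*(r^2*x^2*(q*s)) ≤ 2*(r^3*x^3) + q^3*s^3 := by
  nlinarith [mul_nonneg (sq_nonneg (r*x - q*s))
    (by positivity : (0:ℝ) ≤ 2*(r*x) + q*s)]

lemma key_abstract {a b s t P Q r : ℝ} (ha : 0 ≤ a) (hb : 0 ≤ b) (hs : 0 ≤ s)
    (ht : 0 ≤ t) (hP : 0 ≤ P) (hQ : 0 ≤ Q) (hr0 : 0 < r)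
    (hs2 : s^2 = a^2 + b^2) (hr2 : r^2 = P^2 + Q^2)
    (hcore : 9*(t^2)^3*(P^2+Q^2) ≤ 16*(P^2*Q^2)) :
    3/4*(s^3*t^3) ≤ a^3*P + b^3*Q := by
  have t1 := tang hr0.le ha hQ hs
  have t2 := tang hr0.le hb hP hs
  have sum12 := add_le_add (mul_le_mul_of_nonneg_left t1 hP)
    (mul_le_mul_of_nonneg_left t2 hQ)
  have e1 : P*(3*(r^2*a^2*(Q*s))) + Q*(3*(r^2*b^2*(P*s)))
      = 3*(P*Q*r^2)*(s*a^2 + s*b^2) := by ring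
  have e2 : s*a^2 + s*b^2 = s^3 := by linear_combination (-s)*hs2
  have e3 : P*(2*(r^3*a^3)+Q^3*s^3) + Q*(2*(r^3*b^3)+P^3*s^3)
      = 2*(r^3*(a^3*P+b^3*Q)) + (P*Q*s^3)*(P^2+Q^2) := by ring
  have comb : 3*(P*Q*r^2)*s^3 ≤ 2*(r^3*(a^3*P+b^3*Q)) + (P*Q*s^3)*r^2 := by
    rw [e1, e2, e3, ← hr2] at sum12; exact sum12
  have step1 : P*Q*s^3 ≤ r*(a^3*P + b^3*Q) := by
    have h2 : (0:ℝ) < 2*r^2 := by positivity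
    have : (2*r^2)*(P*Q*s^3) ≤ (2*r^2)*(r*(a^3*P+b^3*Q)) := by nlinarith [comb]
    exact (mul_le_mul_iff_right₀ h2).mp this
  have core : 3/4*(t^3*r) ≤ P*Q := by
    have hsq : (3/4*(t^3*r))^2 ≤ (P*Q)^2 := by
      have e4 : (3/4*(t^3*r))^2 = 9/16*((t^2)^3*r^2) := by ring
      rw [e4, hr2]; nlinarith [hcore]
    have h1 : (0:ℝ) ≤ 3/4*(t^3*r) := by positivity
    nlinarith [hsq, h1, mul_nonneg hP hQ]
  have fin : r*(3/4*(s^3*t^3)) ≤ r*(a^3*P+b^3*Q) := by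
    calc r*(3/4*(s^3*t^3)) = (3/4*(t^3*r))*s^3 := by ring
      _ ≤ (P*Q)*s^3 := mul_le_mul_of_nonneg_right core (by positivity)
      _ ≤ r*(a^3*P + b^3*Q) := step1
  exact (mul_le_mul_iff_right₀ hr0).mp fin

lemma key' {α β γ δ : ℝ} (hα : 0 ≤ α) (hβ : 0 ≤ β) (hγ : 0 ≤ γ) (hδ : 0 ≤ δ) :
    3/4 * (pw (α^2+β^2) * pw (γ^2+δ^2))
      ≤ α^3*γ^3 + 2*(α^3*δ^3) + 2*(β^3*γ^3) + β^3*δ^3 := by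
  have pwS : pw (α^2+β^2) = (Real.sqrt (α^2+β^2))^3 := pw_sqrt_cube (by positivity)
  have pwT : pw (γ^2+δ^2) = (Real.sqrt (γ^2+δ^2))^3 := pw_sqrt_cube (by positivity)
  rw [pwS, pwT]
  have hs2 : (Real.sqrt (α^2+β^2))^2 = α^2+β^2 := Real.sq_sqrt (by positivity)
  have ht2 : (Real.sqrt (γ^2+δ^2))^2 = γ^2+δ^2 := Real.sq_sqrt (by positivity)
  have hP : (0:ℝ) ≤ γ^3+2*δ^3 := by positivity
  have hQ : (0:ℝ) ≤ 2*γ^3+δ^3 := by positivity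
  rcases eq_or_lt_of_le (by positivity : (0:ℝ) ≤ (γ^3+2*δ^3)^2+(2*γ^3+δ^3)^2) with h0 | hPQ
  · have hγ3 : γ^3 = 0 := by
      nlinarith [sq_nonneg (γ^3+2*δ^3), sq_nonneg (2*γ^3+δ^3), pow_nonneg hγ 3,
        pow_nonneg hδ 3, sq_nonneg (γ^3-δ^3), mul_nonneg (pow_nonneg hγ 3) (pow_nonneg hδ 3)]
    have hδ3 : δ^3 = 0 := by
      nlinarith [sq_nonneg (γ^3+2*δ^3), sq_nonneg (2*γ^3+δ^3), pow_nonneg hγ 3,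
        pow_nonneg hδ 3, sq_nonneg (γ^3-δ^3), mul_nonneg (pow_nonneg hγ 3) (pow_nonneg hδ 3)]
    have hγ0 : γ = 0 := pow_eq_zero_iff (n := 3) (by norm_num) |>.mp hγ3
    have hδ0 : δ = 0 := pow_eq_zero_iff (n := 3) (by norm_num) |>.mp hδ3
    rw [hγ0, hδ0]
    norm_num
  · have hr2 : (Real.sqrt ((γ^3+2*δ^3)^2+(2*γ^3+δ^3)^2))^2
        = (γ^3+2*δ^3)^2+(2*γ^3+δ^3)^2 := Real.sq_sqrt hPQ.le
    have hr0 : 0 < Real.sqrt ((γ^3+2*δ^3)^2+(2*γ^3+δ^3)^2) := Real.sqrt_pos.2 hPQ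
    have hcore : 9*(((Real.sqrt (γ^2+δ^2))^2)^3)*((γ^3+2*δ^3)^2+(2*γ^3+δ^3)^2)
        ≤ 16*((γ^3+2*δ^3)^2*(2*γ^3+δ^3)^2) := by
      rw [ht2]; exact poly_core hγ hδ
    have h := key_abstract hα hβ (Real.sqrt_nonneg (α^2+β^2)) (Real.sqrt_nonneg (γ^2+δ^2))
      hP hQ hr0 hs2 hr2 hcore
    linarith [h]

lemma key {A B C D : ℝ} (hA : 0 ≤ A) (hB : 0 ≤ B) (hC : 0 ≤ C) (hD : 0 ≤ D) :
    3/4 * (pw (A+B) * pw (C+D))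
      ≤ pw A * pw C + 2*(pw A * pw D) + 2*(pw B * pw C) + pw B * pw D := by
  have h := key' (Real.sqrt_nonneg A) (Real.sqrt_nonneg B) (Real.sqrt_nonneg C)
    (Real.sqrt_nonneg D)
  rw [Real.sq_sqrt hA, Real.sq_sqrt hB, Real.sq_sqrt hC, Real.sq_sqrt hD] at h
  rw [pw_sqrt_cube hA, pw_sqrt_cube hB, pw_sqrt_cube hC, pw_sqrt_cube hD]
  exact h

end KeyIneq

section Comb

def Wt (x y : Bool) : ℕ :=
  (Finset.univ.filter fun π : Equiv.Perm (Fin 3) =>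
    (decide (π 0 < π 1) = x ∧ decide (π 1 < π 2) = y)).card

lemma Wt_tt : Wt true true = 1 := by decide
lemma Wt_tf : Wt true false = 2 := by decide
lemma Wt_ft : Wt false true = 2 := by decide
lemma Wt_ff : Wt false false = 1 := by decide

lemma sum_pi_succ {n : ℕ} {M : Type*} [AddCommMonoid M] (f : (Fin (n+1) → Bool) → M) :
    ∑ x : Fin (n+1) → Bool, f x
      = ∑ x₀ : Bool, ∑ x' : Fin n → Bool, f (Fin.cons x₀ x') := by
  have h1 : ∑ p : Bool × (Fin n → Bool), f (Fin.cons p.1 p.2) = ∑ x : Fin (n+1) → Bool, f x :=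
    Fintype.sum_equiv (Fin.consEquiv fun _ => Bool) (fun p => f (Fin.cons p.1 p.2)) f
      (fun p => rfl)
  rw [← h1, Fintype.sum_prod_type]

lemma main_ind : ∀ (n : ℕ) (u v : (Fin n → Bool) → ℝ), (∀ x, 0 ≤ u x) → (∀ x, 0 ≤ v x) →
    (3/4 : ℝ)^n * (pw (∑ x, (u x)^2) * pw (∑ y, (v y)^2)) ≤
      ∑ x : Fin n → Bool, ∑ y : Fin n → Bool,
        (∏ i, (Wt (x i) (y i) : ℝ)) * ((u x)^3 * (v y)^3) := by
  intro n
  induction n with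
  | zero =>
    intro u v hu hv
    have e1 : (∑ x : Fin 0 → Bool, (u x)^2) = (u (fun a => false))^2 :=
      Fintype.sum_subsingleton _ _
    have e2 : (∑ y : Fin 0 → Bool, (v y)^2) = (v (fun a => false))^2 :=
      Fintype.sum_subsingleton _ _
    have e3 : (∑ x : Fin 0 → Bool, ∑ y : Fin 0 → Bool,
        (∏ i, (Wt (x i) (y i) : ℝ)) * ((u x)^3 * (v y)^3))
        = (u (fun a => false))^3 * (v (fun a => false))^3 := by
      rw [Fintype.sum_subsingleton _ (fun a : Fin 0 => false),
        Fintype.sum_subsingleton _ (fun a : Fin 0 => false)]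
      simp
    rw [e1, e2, e3, pw_sq (hu _), pw_sq (hv _)]
    norm_num
  | succ n ih =>
    intro u v hu hv
    have hA0 : ∀ b : Bool, (0:ℝ) ≤ ∑ x' : Fin n → Bool, (u (Fin.cons b x'))^2 :=
      fun b => Finset.sum_nonneg fun x _ => sq_nonneg _
    have hC0 : ∀ b : Bool, (0:ℝ) ≤ ∑ y' : Fin n → Bool, (v (Fin.cons b y'))^2 :=
      fun b => Finset.sum_nonneg fun y _ => sq_nonneg _
    -- rewrite RHS
    rw [sum_pi_succ (fun x => ∑ y : Fin (n+1) → Bool,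
      (∏ i, (Wt (x i) (y i) : ℝ)) * ((u x)^3 * (v y)^3))]
    have eR : ∀ x₀ : Bool, (∑ x' : Fin n → Bool, ∑ y : Fin (n+1) → Bool,
        (∏ i, (Wt ((Fin.cons x₀ x' : Fin (n+1) → Bool) i) (y i) : ℝ)) * ((u (Fin.cons x₀ x'))^3 * (v y)^3))
        = ∑ y₀ : Bool, ∑ x' : Fin n → Bool, ∑ y' : Fin n → Bool,
          (∏ i, (Wt ((Fin.cons x₀ x' : Fin (n+1) → Bool) i) ((Fin.cons y₀ y' : Fin (n+1) → Bool) i) : ℝ))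
            * ((u (Fin.cons x₀ x'))^3 * (v (Fin.cons y₀ y'))^3) := by
      intro x₀
      have h1 : ∀ x' : Fin n → Bool, (∑ y : Fin (n+1) → Bool,
          (∏ i, (Wt ((Fin.cons x₀ x' : Fin (n+1) → Bool) i) (y i) : ℝ))
            * ((u (Fin.cons x₀ x'))^3 * (v y)^3))
          = ∑ y₀ : Bool, ∑ y' : Fin n → Bool,
            (∏ i, (Wt ((Fin.cons x₀ x' : Fin (n+1) → Bool) i)
                ((Fin.cons y₀ y' : Fin (n+1) → Bool) i) : ℝ))
              * ((u (Fin.cons x₀ x'))^3 * (v (Fin.cons y₀ y'))^3) :=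
        fun x' => sum_pi_succ _
      rw [Finset.sum_congr rfl fun x' _ => h1 x']
      exact Finset.sum_comm
    rw [Finset.sum_congr rfl fun x₀ _ => eR x₀]
    -- inner bound
    have inner_bound : ∀ x₀ y₀ : Bool,
        (Wt x₀ y₀ : ℝ) * ((3/4:ℝ)^n
            * (pw (∑ x' : Fin n → Bool, (u (Fin.cons x₀ x'))^2)
              * pw (∑ y' : Fin n → Bool, (v (Fin.cons y₀ y'))^2)))
          ≤ ∑ x' : Fin n → Bool, ∑ y' : Fin n → Bool,
              (∏ i, (Wt ((Fin.cons x₀ x' : Fin (n+1) → Bool) i) ((Fin.cons y₀ y' : Fin (n+1) → Bool) i) : ℝ))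
                * ((u (Fin.cons x₀ x'))^3 * (v (Fin.cons y₀ y'))^3) := by
      intro x₀ y₀
      have ihh := ih (fun x' => u (Fin.cons x₀ x')) (fun y' => v (Fin.cons y₀ y'))
        (fun x' => hu _) (fun y' => hv _)
      have hsplit : ∀ (x' y' : Fin n → Bool),
          (∏ i, (Wt ((Fin.cons x₀ x' : Fin (n+1) → Bool) i) ((Fin.cons y₀ y' : Fin (n+1) → Bool) i) : ℝ))
          = (Wt x₀ y₀ : ℝ) * ∏ i, (Wt (x' i) (y' i) : ℝ) := by
        intro x' y'
        rw [Fin.prod_univ_succ]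
        simp [Fin.cons_zero, Fin.cons_succ]
      calc (Wt x₀ y₀ : ℝ) * ((3/4:ℝ)^n
            * (pw (∑ x' : Fin n → Bool, (u (Fin.cons x₀ x'))^2)
              * pw (∑ y' : Fin n → Bool, (v (Fin.cons y₀ y'))^2)))
          ≤ (Wt x₀ y₀ : ℝ) * ∑ x' : Fin n → Bool, ∑ y' : Fin n → Bool,
              (∏ i, (Wt (x' i) (y' i) : ℝ))
                * ((u (Fin.cons x₀ x'))^3 * (v (Fin.cons y₀ y'))^3) := by
            exact mul_le_mul_of_nonneg_left ihh (Nat.cast_nonneg _)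
        _ = ∑ x' : Fin n → Bool, ∑ y' : Fin n → Bool,
              (∏ i, (Wt ((Fin.cons x₀ x' : Fin (n+1) → Bool) i) ((Fin.cons y₀ y' : Fin (n+1) → Bool) i) : ℝ))
                * ((u (Fin.cons x₀ x'))^3 * (v (Fin.cons y₀ y'))^3) := by
            rw [Finset.mul_sum]
            refine Finset.sum_congr rfl fun x' _ => ?_
            rw [Finset.mul_sum]
            refine Finset.sum_congr rfl fun y' _ => ?_
            rw [hsplit x' y']; ring
    -- sum the inner bounds
    have sum_bound : ∑ x₀ : Bool, ∑ y₀ : Bool, (Wt x₀ y₀ : ℝ) * ((3/4:ℝ)^n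
            * (pw (∑ x' : Fin n → Bool, (u (Fin.cons x₀ x'))^2)
              * pw (∑ y' : Fin n → Bool, (v (Fin.cons y₀ y'))^2)))
        ≤ ∑ x₀ : Bool, ∑ y₀ : Bool, ∑ x' : Fin n → Bool, ∑ y' : Fin n → Bool,
              (∏ i, (Wt ((Fin.cons x₀ x' : Fin (n+1) → Bool) i) ((Fin.cons y₀ y' : Fin (n+1) → Bool) i) : ℝ))
                * ((u (Fin.cons x₀ x'))^3 * (v (Fin.cons y₀ y'))^3) :=
      Finset.sum_le_sum fun x₀ _ => Finset.sum_le_sum fun y₀ _ => inner_bound x₀ y₀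
    refine le_trans ?_ sum_bound
    -- now the key inequality
    have hsumu : ∑ x : Fin (n+1) → Bool, (u x)^2
        = (∑ x' : Fin n → Bool, (u (Fin.cons true x'))^2)
          + ∑ x' : Fin n → Bool, (u (Fin.cons false x'))^2 := by
      rw [sum_pi_succ (fun x => (u x)^2), Fintype.sum_bool]
    have hsumv : ∑ y : Fin (n+1) → Bool, (v y)^2
        = (∑ y' : Fin n → Bool, (v (Fin.cons true y'))^2)
          + ∑ y' : Fin n → Bool, (v (Fin.cons false y'))^2 := by
      rw [sum_pi_succ (fun y => (v y)^2), Fintype.sum_bool]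
    rw [hsumu, hsumv]
    simp only [Fintype.sum_bool, Wt_tt, Wt_tf, Wt_ft, Wt_ff]
    push_cast
    have hk := key (hA0 true) (hA0 false) (hC0 true) (hC0 false)
    have h34 : (0:ℝ) ≤ (3/4:ℝ)^n := by positivity
    have := mul_le_mul_of_nonneg_left hk h34
    calc (3/4:ℝ)^(n+1) * (pw ((∑ x' : Fin n → Bool, (u (Fin.cons true x'))^2)
            + ∑ x' : Fin n → Bool, (u (Fin.cons false x'))^2)
          * pw ((∑ y' : Fin n → Bool, (v (Fin.cons true y'))^2)
            + ∑ y' : Fin n → Bool, (v (Fin.cons false y'))^2))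
        = (3/4:ℝ)^n * (3/4 * (pw ((∑ x' : Fin n → Bool, (u (Fin.cons true x'))^2)
            + ∑ x' : Fin n → Bool, (u (Fin.cons false x'))^2)
          * pw ((∑ y' : Fin n → Bool, (v (Fin.cons true y'))^2)
            + ∑ y' : Fin n → Bool, (v (Fin.cons false y'))^2))) := by ring
      _ ≤ (3/4:ℝ)^n * (pw (∑ x' : Fin n → Bool, (u (Fin.cons true x'))^2)
              * pw (∑ y' : Fin n → Bool, (v (Fin.cons true y'))^2)
            + 2*(pw (∑ x' : Fin n → Bool, (u (Fin.cons true x'))^2)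
              * pw (∑ y' : Fin n → Bool, (v (Fin.cons false y'))^2))
            + 2*(pw (∑ x' : Fin n → Bool, (u (Fin.cons false x'))^2)
              * pw (∑ y' : Fin n → Bool, (v (Fin.cons true y'))^2))
            + pw (∑ x' : Fin n → Bool, (u (Fin.cons false x'))^2)
              * pw (∑ y' : Fin n → Bool, (v (Fin.cons false y'))^2)) := this
      _ = 1 * ((3/4:ℝ)^n * (pw (∑ x' : Fin n → Bool, (u (Fin.cons true x'))^2)
              * pw (∑ y' : Fin n → Bool, (v (Fin.cons true y'))^2)))
          + 2 * ((3/4:ℝ)^n * (pw (∑ x' : Fin n → Bool, (u (Fin.cons true x'))^2)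
              * pw (∑ y' : Fin n → Bool, (v (Fin.cons false y'))^2)))
          + (2 * ((3/4:ℝ)^n * (pw (∑ x' : Fin n → Bool, (u (Fin.cons false x'))^2)
              * pw (∑ y' : Fin n → Bool, (v (Fin.cons true y'))^2)))
          + 1 * ((3/4:ℝ)^n * (pw (∑ x' : Fin n → Bool, (u (Fin.cons false x'))^2)
              * pw (∑ y' : Fin n → Bool, (v (Fin.cons false y'))^2)))) := by ring
lemma fiber_card {n : ℕ} (x y : Fin n → Bool) :
    (Finset.univ.filter fun σ : Fin n → Equiv.Perm (Fin 3) =>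
      pairVec 0 1 σ = x ∧ pairVec 1 2 σ = y).card = ∏ i, Wt (x i) (y i) := by
  have : (Finset.univ.filter fun σ : Fin n → Equiv.Perm (Fin 3) =>
      pairVec 0 1 σ = x ∧ pairVec 1 2 σ = y)
      = Fintype.piFinset (fun i => Finset.univ.filter fun π : Equiv.Perm (Fin 3) =>
          (decide (π 0 < π 1) = x i ∧ decide (π 1 < π 2) = y i)) := by
    ext σ
    simp only [Finset.mem_filter, Finset.mem_univ, true_and, Fintype.mem_piFinset,
      pairVec, funext_iff]
    exact ⟨fun ⟨h1, h2⟩ i => ⟨h1 i, h2 i⟩, fun h => ⟨fun i => (h i).1, fun i => (h i).2⟩⟩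
  rw [this, Fintype.card_piFinset]
  rfl

lemma sum_eq_double {n : ℕ} (F G : (Fin n → Bool) → ℝ) :
    ∑ σ : Fin n → Equiv.Perm (Fin 3), F (pairVec 0 1 σ) * G (pairVec 1 2 σ)
    = ∑ x : Fin n → Bool, ∑ y : Fin n → Bool,
        (∏ i, (Wt (x i) (y i) : ℝ)) * (F x * G y) := by
  rw [← Finset.sum_fiberwise (Finset.univ)
    (fun σ : Fin n → Equiv.Perm (Fin 3) => (pairVec 0 1 σ, pairVec 1 2 σ))
    (fun σ => F (pairVec 0 1 σ) * G (pairVec 1 2 σ)), Fintype.sum_prod_type]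
  refine Finset.sum_congr rfl fun x _ => Finset.sum_congr rfl fun y _ => ?_
  have hfib : (Finset.univ.filter fun σ : Fin n → Equiv.Perm (Fin 3) =>
      (pairVec 0 1 σ, pairVec 1 2 σ) = (x, y))
      = (Finset.univ.filter fun σ : Fin n → Equiv.Perm (Fin 3) =>
      pairVec 0 1 σ = x ∧ pairVec 1 2 σ = y) := by
    refine Finset.filter_congr fun σ _ => ?_
    simp [Prod.ext_iff]
  rw [hfib]
  calc ∑ σ ∈ Finset.univ.filter (fun σ : Fin n → Equiv.Perm (Fin 3) =>
          pairVec 0 1 σ = x ∧ pairVec 1 2 σ = y), F (pairVec 0 1 σ) * G (pairVec 1 2 σ)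
      = ∑ σ ∈ Finset.univ.filter (fun σ : Fin n → Equiv.Perm (Fin 3) =>
          pairVec 0 1 σ = x ∧ pairVec 1 2 σ = y), F x * G y := by
        refine Finset.sum_congr rfl fun σ hσ => ?_
        simp only [Finset.mem_filter] at hσ
        rw [hσ.2.1, hσ.2.2]
    _ = ((∏ i, Wt (x i) (y i) : ℕ) : ℝ) * (F x * G y) := by
        rw [Finset.sum_const, fiber_card, nsmul_eq_mul]
    _ = (∏ i, (Wt (x i) (y i) : ℝ)) * (F x * G y) := by push_cast; ring

theorem stmt_7 (n : ℕ) (fab fbc : (Fin n → Bool) → Bool) (i j : Fin n) (hij : i ≠ j)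
    (ε : ℝ) (hε : 0 < ε)
    (hi : ε < influence fab i) (hj : ε < influence fbc j) :
    ε^3 ≤ ((Finset.univ.filter fun σ : Fin n → Equiv.Perm (Fin 3) =>
        PivotalAt fab i (pairVec 0 1 σ) ∧ PivotalAt fbc j (pairVec 1 2 σ)).card : ℝ)
      / 6^n := by
  classical
  set F : (Fin n → Bool) → ℝ := fun x => if PivotalAt fab i x then 1 else 0 with hF
  set G : (Fin n → Bool) → ℝ := fun y => if PivotalAt fbc j y then 1 else 0 with hG
  have hF0 : ∀ x, 0 ≤ F x := fun x => by rw [hF]; dsimp only; split <;> norm_num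
  have hG0 : ∀ y, 0 ≤ G y := fun y => by rw [hG]; dsimp only; split <;> norm_num
  have hFsq : ∀ x, (F x)^2 = F x := fun x => by rw [hF]; dsimp only; split <;> norm_num
  have hGsq : ∀ y, (G y)^2 = G y := fun y => by rw [hG]; dsimp only; split <;> norm_num
  have hFcu : ∀ x, (F x)^3 = F x := fun x => by rw [hF]; dsimp only; split <;> norm_num
  have hGcu : ∀ y, (G y)^3 = G y := fun y => by rw [hG]; dsimp only; split <;> norm_num
  set cA : ℝ := ((Finset.univ.filter fun x : Fin n → Bool => PivotalAt fab i x).card : ℝ)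
    with hcA
  set cB : ℝ := ((Finset.univ.filter fun y : Fin n → Bool => PivotalAt fbc j y).card : ℝ)
    with hcB
  have hsumF : (∑ x : Fin n → Bool, (F x)^2) = cA := by
    simp only [hFsq]; rw [hF, hcA]
    simp [Finset.sum_boole]
  have hsumG : (∑ y : Fin n → Bool, (G y)^2) = cB := by
    simp only [hGsq]; rw [hG, hcB]
    simp [Finset.sum_boole]
  have main := main_ind n F G hF0 hG0
  rw [hsumF, hsumG] at main
  simp only [hFcu, hGcu] at main
  -- identify the σ-count with the double sum
  have hptwise : ∀ σ : Fin n → Equiv.Perm (Fin 3),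
      F (pairVec 0 1 σ) * G (pairVec 1 2 σ)
        = if (PivotalAt fab i (pairVec 0 1 σ) ∧ PivotalAt fbc j (pairVec 1 2 σ))
          then (1:ℝ) else 0 := by
    intro σ
    rw [hF, hG]; dsimp only
    by_cases h1 : PivotalAt fab i (pairVec 0 1 σ) <;>
      by_cases h2 : PivotalAt fbc j (pairVec 1 2 σ) <;> simp [h1, h2]
  have hcount : ((Finset.univ.filter fun σ : Fin n → Equiv.Perm (Fin 3) =>
        PivotalAt fab i (pairVec 0 1 σ) ∧ PivotalAt fbc j (pairVec 1 2 σ)).card : ℝ)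
      = ∑ σ : Fin n → Equiv.Perm (Fin 3), F (pairVec 0 1 σ) * G (pairVec 1 2 σ) := by
    rw [Finset.sum_congr rfl fun σ _ => hptwise σ]
    simp [Finset.sum_boole]
  rw [hcount, sum_eq_double F G]
  -- lower bounds on the counts
  have h2n : (0:ℝ) < 2^n := by positivity
  have hiA : ε * 2^n ≤ cA := by
    have := (lt_div_iff₀ h2n).mp (by rw [influence] at hi; exact hi)
    linarith
  have hjB : ε * 2^n ≤ cB := by
    have := (lt_div_iff₀ h2n).mp (by rw [influence] at hj; exact hj)
    linarith
  have hε2 : (0:ℝ) ≤ ε * 2^n := by positivity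
  have hpw : pw (ε * 2^n) * pw (ε * 2^n) ≤ pw cA * pw cB :=
    mul_le_mul (pw_mono hε2 hiA) (pw_mono hε2 hjB) (pw_nonneg hε2)
      (pw_nonneg (le_trans hε2 hiA))
  have hcube : pw (ε * 2^n) * pw (ε * 2^n) = ε^3 * 8^n := by
    rw [pw_self_mul hε2, mul_pow, ← pow_mul, mul_comm n 3, pow_mul]
    norm_num
  have h68 : (3/4:ℝ)^n * 8^n = 6^n := by
    rw [← mul_pow]; norm_num
  rw [le_div_iff₀ (by positivity : (0:ℝ) < 6^n)]
  calc ε^3 * 6^n = (3/4:ℝ)^n * (ε^3 * 8^n) := by rw [← h68]; ring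
    _ = (3/4:ℝ)^n * (pw (ε * 2^n) * pw (ε * 2^n)) := by rw [hcube]
    _ ≤ (3/4:ℝ)^n * (pw cA * pw cB) := by
        exact mul_le_mul_of_nonneg_left hpw (by positivity)
    _ ≤ _ := main
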